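/- arXiv:1812.03688 — 3 statements merged into one kernel-verified Lean document; each statement's English description precedes it below -/
import Mathlib

section
/- Let ω ∈ [0,1], ϖ = ω² + (1−ω)², and for each i = 1,…,n+m let p_i > s_i > 0 with q_i = p_i − s_i > 0. Define r_i(c), η₁(c) = max_{1≤i≤n} r_i(c), η₂(c) = max_{n+1≤i≤n+m} r_i(c) as follows: r_i(c) = (−(c−1)p_i + √((c−1)²p_i² + 4c(p_i²−s_i²)))/(2cϖ) for i ≤ n and r_i(c) = ((c−1)p_i + √((c−1)²p_i² + 4c(p_i²−s_i²)))/(2cϖ) for i > n. Then: (1) each r_i(c) with i ≤ n is strictly decreasing on (0,∞) with limits ∞ as c→0⁺ and 0 as c→∞, and each r_i(c) with i > n is strictly increasing on (0,∞) with limits (p_i²−s_i²)/(ϖp_i) as c→0⁺ and p_i/ϖ as c→∞; (2) there is a unique c* > 0 with η₁(c*) = η₂(c*); (3) setting t* = η₂(c*) and γ* = c*t*, every pair t, γ > 0 satisfying (t + p_i/ϖ)(γ − p_i/ϖ) > −s_i²/ϖ² and γ > q_i/ϖ for all i ≤ n, and (γ + p_i/ϖ)(t − p_i/ϖ) > −s_i²/ϖ²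 and t > q_i/ϖ for all i > n, satisfies t > t* and γ > γ*; in particular max_{i>n} p_i/ϖ > t* and max_{i≤n} p_i/ϖ > γ*. -/
open Matrix Filter Kronecker

noncomputable section

/-- The ω-weighted linear functional `z ↦ ω·Re z + (1-ω)·Im z`. -/
def wlin (ω : ℝ) (z : ℂ) : ℝ := ω * z.re + (1 - ω) * z.im

/-- The ω-comparison matrix of a complex square matrix. -/
def omegaComp {N : Type*} [DecidableEq N] (ω : ℝ) (B : Matrix N N ℂ) : Matrix N N ℝ :=
  Matrix.of fun i j => if i = j then wlin ω (B i i) else -‖B i j‖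

/-- A real square matrix is a nonsingular M-matrix: nonpositive off-diagonal entries and
`M *ᵥ u > 0` entrywise for some entrywise positive `u`. -/
def IsNonsingMMatrix {N : Type*} [Fintype N] (M : Matrix N N ℝ) : Prop :=
  (∀ i j, i ≠ j → M i j ≤ 0) ∧ ∃ u : N → ℝ, (∀ i, 0 < u i) ∧ ∀ i, 0 < (M *ᵥ u) i

/-- Entrywise absolute value of a complex matrix. -/
def cabs {α β : Type*} (M : Matrix α β ℂ) : Matrix α β ℝ :=
  Matrix.of fun i j => ‖M i j‖

/-- `ϖ = ω² + (1−ω)²`. -/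
def vpi (ω : ℝ) : ℝ := ω ^ 2 + (1 - ω) ^ 2

/-- The larger root of `c t² + (c−1)(p/ϖ) t − p²/ϖ² + s²/ϖ² = 0` (rows `i ≤ n`). -/
def rlow (ϖ p s c : ℝ) : ℝ :=
  (-(c - 1) * p + Real.sqrt ((c - 1) ^ 2 * p ^ 2 + 4 * c * (p ^ 2 - s ^ 2))) / (2 * c * ϖ)

/-- The larger root of `c t² − (c−1)(p/ϖ) t − p²/ϖ² + s²/ϖ² = 0` (rows `i > n`). -/
def rhigh (ϖ p s c : ℝ) : ℝ :=
  ((c - 1) * p + Real.sqrt ((c - 1) ^ 2 * p ^ 2 + 4 * c * (p ^ 2 - s ^ 2))) / (2 * c * ϖ)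

/-- `η₁(c) = max_{1≤i≤n} r_i(c)`. -/
def eta1 {n m : ℕ} (ϖ : ℝ) (p s : Fin n ⊕ Fin m → ℝ) (c : ℝ) : ℝ :=
  ⨆ i : Fin n, rlow ϖ (p (Sum.inl i)) (s (Sum.inl i)) c

/-- `η₂(c) = max_{n+1≤i≤n+m} r_i(c)`. -/
def eta2 {n m : ℕ} (ϖ : ℝ) (p s : Fin n ⊕ Fin m → ℝ) (c : ℝ) : ℝ :=
  ⨆ i : Fin m, rhigh ϖ (p (Sum.inr i)) (s (Sum.inr i)) c

/-! ### Auxiliary lemmas -/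

lemma lt_sqrt_of_sq_lt {x y : ℝ} (h : x ^ 2 < y) : x < Real.sqrt y := by
  have hy : 0 ≤ y := le_of_lt (lt_of_le_of_lt (sq_nonneg x) h)
  nlinarith [Real.sq_sqrt hy, Real.sqrt_nonneg y]

section params
variable {ϖ p s c t : ℝ}

lemma D_pos (hs : 0 < s) (hsp : s < p) (hc : 0 < c) :
    0 < (c - 1) ^ 2 * p ^ 2 + 4 * c * (p ^ 2 - s ^ 2) := by
  have hps : (0:ℝ) < p ^ 2 - s ^ 2 := by nlinarith
  nlinarith [mul_pos hc hps, sq_nonneg ((c - 1) * p)]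

lemma rlow_pos (hϖ : 0 < ϖ) (hs : 0 < s) (hsp : s < p) (hc : 0 < c) : 0 < rlow ϖ p s c := by
  have hps : (0:ℝ) < p ^ 2 - s ^ 2 := by nlinarith
  have h1 : (c - 1) * p < Real.sqrt ((c - 1) ^ 2 * p ^ 2 + 4 * c * (p ^ 2 - s ^ 2)) := by
    apply lt_sqrt_of_sq_lt; nlinarith [mul_pos hc hps]
  apply div_pos (by linarith) (by positivity)

lemma rhigh_pos (hϖ : 0 < ϖ) (hs : 0 < s) (hsp : s < p) (hc : 0 < c) : 0 < rhigh ϖ p s c := by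
  have hps : (0:ℝ) < p ^ 2 - s ^ 2 := by nlinarith
  have h1 : -((c - 1) * p) < Real.sqrt ((c - 1) ^ 2 * p ^ 2 + 4 * c * (p ^ 2 - s ^ 2)) := by
    apply lt_sqrt_of_sq_lt; nlinarith [mul_pos hc hps]
  apply div_pos (by linarith) (by positivity)

lemma rlow_root (hϖ : 0 < ϖ) (hs : 0 < s) (hsp : s < p) (hc : 0 < c) :
    c * ϖ ^ 2 * (rlow ϖ p s c) ^ 2 + (c - 1) * p * ϖ * (rlow ϖ p s c) - (p ^ 2 - s ^ 2) = 0 := by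
  have hD := D_pos hs hsp hc
  have hsq := Real.sq_sqrt hD.le
  have h : (2 * c * ϖ) * rlow ϖ p s c
      = -(c - 1) * p + Real.sqrt ((c - 1) ^ 2 * p ^ 2 + 4 * c * (p ^ 2 - s ^ 2)) := by
    rw [rlow]; field_simp
  have h4 : 4 * c * (c * ϖ ^ 2 * (rlow ϖ p s c) ^ 2 + (c - 1) * p * ϖ * (rlow ϖ p s c)
      - (p ^ 2 - s ^ 2)) = 0 := by
    linear_combination ((2 * c * ϖ) * rlow ϖ p s c + (c - 1) * p
      + Real.sqrt ((c - 1) ^ 2 * p ^ 2 + 4 * c * (p ^ 2 - s ^ 2))) * h + hsq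
  have h4c : (4 * c : ℝ) ≠ 0 := by positivity
  rcases mul_eq_zero.mp h4 with h' | h'
  · exact absurd h' h4c
  · exact h'

lemma rhigh_root (hϖ : 0 < ϖ) (hs : 0 < s) (hsp : s < p) (hc : 0 < c) :
    c * ϖ ^ 2 * (rhigh ϖ p s c) ^ 2 - (c - 1) * p * ϖ * (rhigh ϖ p s c) - (p ^ 2 - s ^ 2) = 0 := by
  have hD := D_pos hs hsp hc
  have hsq := Real.sq_sqrt hD.le
  have h : (2 * c * ϖ) * rhigh ϖ p s c
      = (c - 1) * p + Real.sqrt ((c - 1) ^ 2 * p ^ 2 + 4 * c * (p ^ 2 - s ^ 2)) := by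
    rw [rhigh]; field_simp
  have h4 : 4 * c * (c * ϖ ^ 2 * (rhigh ϖ p s c) ^ 2 - (c - 1) * p * ϖ * (rhigh ϖ p s c)
      - (p ^ 2 - s ^ 2)) = 0 := by
    linear_combination ((2 * c * ϖ) * rhigh ϖ p s c - (c - 1) * p
      + Real.sqrt ((c - 1) ^ 2 * p ^ 2 + 4 * c * (p ^ 2 - s ^ 2))) * h + hsq
  have h4c : (4 * c : ℝ) ≠ 0 := by positivity
  rcases mul_eq_zero.mp h4 with h' | h'
  · exact absurd h' h4c
  · exact h'

lemma rlow_fact (hϖ : 0 < ϖ) (hs : 0 < s) (hsp : s < p) (hc : 0 < c) (t : ℝ) :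
    ∃ L : ℝ, (∀ t' : ℝ, 0 < t' → 0 < c * ϖ ^ 2 * t' + L) ∧
      c * ϖ ^ 2 * t ^ 2 + (c - 1) * p * ϖ * t - (p ^ 2 - s ^ 2)
        = (t - rlow ϖ p s c) * (c * ϖ ^ 2 * t + L) := by
  have hr := rlow_pos hϖ hs hsp hc
  have hroot := rlow_root hϖ hs hsp hc
  have hps : (0:ℝ) < p ^ 2 - s ^ 2 := by nlinarith
  refine ⟨c * ϖ ^ 2 * rlow ϖ p s c + (c - 1) * p * ϖ, fun t' ht' => ?_, by linear_combination hroot⟩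
  have hC : 0 < c * ϖ ^ 2 * rlow ϖ p s c + (c - 1) * p * ϖ := by nlinarith [hroot, hps, hr]
  have : 0 < c * ϖ ^ 2 * t' := by positivity
  linarith

lemma rlow_lt_iff (hϖ : 0 < ϖ) (hs : 0 < s) (hsp : s < p) (hc : 0 < c) (ht : 0 < t) :
    rlow ϖ p s c < t ↔ 0 < c * ϖ ^ 2 * t ^ 2 + (c - 1) * p * ϖ * t - (p ^ 2 - s ^ 2) := by
  obtain ⟨L, hL, hfact⟩ := rlow_fact hϖ hs hsp hc t
  rw [hfact]
  have hLt := hL t ht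
  exact ⟨fun h => mul_pos (by linarith) hLt, fun h => by nlinarith [hLt, h]⟩

lemma rhigh_fact (hϖ : 0 < ϖ) (hs : 0 < s) (hsp : s < p) (hc : 0 < c) (t : ℝ) :
    ∃ L : ℝ, (∀ t' : ℝ, 0 < t' → 0 < c * ϖ ^ 2 * t' + L) ∧
      c * ϖ ^ 2 * t ^ 2 - (c - 1) * p * ϖ * t - (p ^ 2 - s ^ 2)
        = (t - rhigh ϖ p s c) * (c * ϖ ^ 2 * t + L) := by
  have hr := rhigh_pos hϖ hs hsp hc
  have hroot := rhigh_root hϖ hs hsp hc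
  have hps : (0:ℝ) < p ^ 2 - s ^ 2 := by nlinarith
  refine ⟨c * ϖ ^ 2 * rhigh ϖ p s c - (c - 1) * p * ϖ, fun t' ht' => ?_, by linear_combination hroot⟩
  have hC : 0 < c * ϖ ^ 2 * rhigh ϖ p s c - (c - 1) * p * ϖ := by nlinarith [hroot, hps, hr]
  have : 0 < c * ϖ ^ 2 * t' := by positivity
  linarith

lemma rhigh_lt_iff (hϖ : 0 < ϖ) (hs : 0 < s) (hsp : s < p) (hc : 0 < c) (ht : 0 < t) :
    rhigh ϖ p s c < t ↔ 0 < c * ϖ ^ 2 * t ^ 2 - (c - 1) * p * ϖ * t - (p ^ 2 - s ^ 2) := by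
  obtain ⟨L, hL, hfact⟩ := rhigh_fact hϖ hs hsp hc t
  rw [hfact]
  have hLt := hL t ht
  exact ⟨fun h => mul_pos (by linarith) hLt, fun h => by nlinarith [hLt, h]⟩

lemma rhigh_unique (hϖ : 0 < ϖ) (hs : 0 < s) (hsp : s < p) (hc : 0 < c) (ht : 0 < t)
    (h : c * ϖ ^ 2 * t ^ 2 - (c - 1) * p * ϖ * t - (p ^ 2 - s ^ 2) = 0) : t = rhigh ϖ p s c := by
  obtain ⟨L, hL, hfact⟩ := rhigh_fact hϖ hs hsp hc t
  rw [hfact] at h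
  rcases mul_eq_zero.mp h with h' | h'
  · linarith [sub_eq_zero.mp h']
  · exact absurd h' (ne_of_gt (hL t ht))

lemma rhigh_lt_top (hϖ : 0 < ϖ) (hs : 0 < s) (hsp : s < p) (hc : 0 < c) :
    rhigh ϖ p s c < p / ϖ := by
  rw [rhigh_lt_iff hϖ hs hsp hc (div_pos (lt_trans hs hsp) hϖ)]
  have he : c * ϖ ^ 2 * (p / ϖ) ^ 2 - (c - 1) * p * ϖ * (p / ϖ) - (p ^ 2 - s ^ 2) = s ^ 2 := by
    field_simp; ring
  rw [he]; positivity

lemma rlow_strictAntiOn (hϖ : 0 < ϖ) (hs : 0 < s) (hsp : s < p) :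
    StrictAntiOn (fun c => rlow ϖ p s c) (Set.Ioi 0) := by
  intro a ha b hb hab
  simp only
  have ha0 : (0:ℝ) < a := ha
  have hb0 : (0:ℝ) < b := hb
  have hra := rlow_pos hϖ hs hsp ha0
  have hroot := rlow_root hϖ hs hsp ha0
  rw [rlow_lt_iff hϖ hs hsp hb0 hra]
  have key : b * ϖ ^ 2 * (rlow ϖ p s a) ^ 2 + (b - 1) * p * ϖ * (rlow ϖ p s a) - (p ^ 2 - s ^ 2)
      = (b - a) * (ϖ ^ 2 * (rlow ϖ p s a) ^ 2 + p * ϖ * (rlow ϖ p s a)) := by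
    linear_combination hroot
  rw [key]
  have hp : 0 < p := lt_trans hs hsp
  have : 0 < ϖ ^ 2 * (rlow ϖ p s a) ^ 2 + p * ϖ * (rlow ϖ p s a) := by positivity
  exact mul_pos (by linarith) this

lemma rhigh_strictMonoOn (hϖ : 0 < ϖ) (hs : 0 < s) (hsp : s < p) :
    StrictMonoOn (fun c => rhigh ϖ p s c) (Set.Ioi 0) := by
  intro a ha b hb hab
  simp only
  have ha0 : (0:ℝ) < a := ha
  have hb0 : (0:ℝ) < b := hb
  have hra := rhigh_pos hϖ hs hsp ha0
  have hroot := rhigh_root hϖ hs hsp ha0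
  have hlt : ϖ * rhigh ϖ p s a < p := by
    have := rhigh_lt_top hϖ hs hsp ha0
    rw [lt_div_iff₀ hϖ] at this; linarith [this]
  have key : b * ϖ ^ 2 * (rhigh ϖ p s a) ^ 2 - (b - 1) * p * ϖ * (rhigh ϖ p s a) - (p ^ 2 - s ^ 2)
      = (b - a) * (ϖ * rhigh ϖ p s a) * (ϖ * rhigh ϖ p s a - p) := by
    linear_combination hroot
  rcases lt_trichotomy (rhigh ϖ p s a) (rhigh ϖ p s b) with h | h | h
  · exact h
  · exfalso
    have h0 := rhigh_root hϖ hs hsp hb0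
    rw [← h] at h0
    rw [key] at h0
    have h1 : 0 < (b - a) * (ϖ * rhigh ϖ p s a) := mul_pos (by linarith) (by positivity)
    nlinarith [h0, h1, hlt]
  · exfalso
    have := (rhigh_lt_iff hϖ hs hsp hb0 hra).mp h
    rw [key] at this
    have h1 : 0 < (b - a) * (ϖ * rhigh ϖ p s a) := mul_pos (by linarith) (by positivity)
    nlinarith [this, h1, hlt]

lemma rhigh_inv_eq (hϖ : 0 < ϖ) (hs : 0 < s) (hsp : s < p) (hc : 0 < c) :
    rhigh ϖ p s c⁻¹ = c * rlow ϖ p s c := by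
  have hr := rlow_pos hϖ hs hsp hc
  have hroot := rlow_root hϖ hs hsp hc
  have hc' : (0:ℝ) < c⁻¹ := by positivity
  refine (rhigh_unique hϖ hs hsp hc' (by positivity) ?_).symm
  have hinv : c⁻¹ * c = 1 := inv_mul_cancel₀ hc.ne'
  have expand : c⁻¹ * ϖ ^ 2 * (c * rlow ϖ p s c) ^ 2 - (c⁻¹ - 1) * p * ϖ * (c * rlow ϖ p s c)
      - (p ^ 2 - s ^ 2)
      = (c⁻¹ * c) * (c * ϖ ^ 2 * (rlow ϖ p s c) ^ 2) - ((c⁻¹ * c) - c) * p * ϖ * rlow ϖ p s c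
      - (p ^ 2 - s ^ 2) := by ring
  rw [expand, hinv]
  linear_combination hroot

lemma cont_num (p s : ℝ) :
    Continuous fun c : ℝ => Real.sqrt ((c - 1) ^ 2 * p ^ 2 + 4 * c * (p ^ 2 - s ^ 2)) :=
  Continuous.sqrt (by continuity)

lemma rlow_continuousOn (hϖ : 0 < ϖ) : ContinuousOn (fun c => rlow ϖ p s c) (Set.Ioi 0) := by
  simp only [rlow]
  apply ContinuousOn.div
  · exact (Continuous.add (by continuity) (cont_num p s)).continuousOn
  · exact (by continuity : Continuous fun c : ℝ => 2 * c * ϖ).continuousOn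
  · intro c hc
    have hc0 : (0:ℝ) < c := hc
    positivity

lemma rhigh_continuousOn (hϖ : 0 < ϖ) : ContinuousOn (fun c => rhigh ϖ p s c) (Set.Ioi 0) := by
  simp only [rhigh]
  apply ContinuousOn.div
  · exact (Continuous.add (by continuity) (cont_num p s)).continuousOn
  · exact (by continuity : Continuous fun c : ℝ => 2 * c * ϖ).continuousOn
  · intro c hc
    have hc0 : (0:ℝ) < c := hc
    positivity

lemma rlow_tendsto_zero (hϖ : 0 < ϖ) (hs : 0 < s) (hsp : s < p) :
    Tendsto (fun c => rlow ϖ p s c) (nhdsWithin 0 (Set.Ioi 0)) atTop := by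
  have hp : 0 < p := lt_trans hs hsp
  have h1 : Tendsto (fun c : ℝ =>
      (-(c - 1) * p + Real.sqrt ((c - 1) ^ 2 * p ^ 2 + 4 * c * (p ^ 2 - s ^ 2))) / (2 * ϖ))
      (nhds 0) (nhds (p / ϖ)) := by
    have hcont : Continuous fun c : ℝ =>
        (-(c - 1) * p + Real.sqrt ((c - 1) ^ 2 * p ^ 2 + 4 * c * (p ^ 2 - s ^ 2))) / (2 * ϖ) :=
      (Continuous.add (by continuity) (cont_num p s)).div_const _
    convert hcont.tendsto 0 using 2
    rw [show ((0 - 1 : ℝ)) ^ 2 * p ^ 2 + 4 * 0 * (p ^ 2 - s ^ 2) = p ^ 2 by ring,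
      Real.sqrt_sq hp.le]
    field_simp
    ring
  have h2 : Tendsto (fun c : ℝ => c⁻¹) (nhdsWithin 0 (Set.Ioi 0)) atTop := tendsto_inv_nhdsGT_zero
  have h3 := Filter.Tendsto.pos_mul_atTop (div_pos hp hϖ) (h1.mono_left nhdsWithin_le_nhds) h2
  exact h3.congr fun c => by rw [rlow]; ring

lemma rlow_tendsto_atTop (hϖ : 0 < ϖ) (hs : 0 < s) (hsp : s < p) :
    Tendsto (fun c => rlow ϖ p s c) atTop (nhds 0) := by
  have hp : 0 < p := lt_trans hs hsp
  have hps : (0:ℝ) < p ^ 2 - s ^ 2 := by nlinarith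
  have heq : ∀ᶠ c in atTop, 2 * (p ^ 2 - s ^ 2) /
      (ϖ * ((c - 1) * p + Real.sqrt ((c - 1) ^ 2 * p ^ 2 + 4 * c * (p ^ 2 - s ^ 2))))
      = rlow ϖ p s c := by
    filter_upwards [eventually_gt_atTop (0:ℝ)] with c hc
    have hD := D_pos hs hsp hc
    have hsq := Real.sq_sqrt hD.le
    have hden : 0 < (c - 1) * p + Real.sqrt ((c - 1) ^ 2 * p ^ 2 + 4 * c * (p ^ 2 - s ^ 2)) := by
      have : (1 - c) * p < Real.sqrt ((c - 1) ^ 2 * p ^ 2 + 4 * c * (p ^ 2 - s ^ 2)) := by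
        apply lt_sqrt_of_sq_lt; nlinarith [mul_pos hc hps]
      linarith
    rw [rlow, div_eq_div_iff (by positivity) (by positivity)]
    linear_combination -ϖ * hsq
  have hden_top : Tendsto (fun c : ℝ =>
      ϖ * ((c - 1) * p + Real.sqrt ((c - 1) ^ 2 * p ^ 2 + 4 * c * (p ^ 2 - s ^ 2))))
      atTop atTop := by
    apply tendsto_atTop_mono (f := fun c : ℝ => ϖ * ((c - 1) * p))
    · intro c
      have := Real.sqrt_nonneg ((c - 1) ^ 2 * p ^ 2 + 4 * c * (p ^ 2 - s ^ 2))
      nlinarith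
    · have hlin : Tendsto (fun c : ℝ => c - 1) atTop atTop :=
        tendsto_atTop_add_const_right atTop (-1) tendsto_id |>.congr fun c => by
          simp [sub_eq_add_neg]
      exact ((hlin.atTop_mul_const hp).const_mul_atTop hϖ)
  exact (Tendsto.div_atTop tendsto_const_nhds hden_top).congr' heq

lemma rhigh_tendsto_zero (hϖ : 0 < ϖ) (hs : 0 < s) (hsp : s < p) :
    Tendsto (fun c => rhigh ϖ p s c) (nhdsWithin 0 (Set.Ioi 0))
      (nhds ((p ^ 2 - s ^ 2) / (ϖ * p))) := by
  have hp : 0 < p := lt_trans hs hsp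
  have hps : (0:ℝ) < p ^ 2 - s ^ 2 := by nlinarith
  have heq : ∀ᶠ c in nhdsWithin (0:ℝ) (Set.Ioi 0), 2 * (p ^ 2 - s ^ 2) /
      (ϖ * (Real.sqrt ((c - 1) ^ 2 * p ^ 2 + 4 * c * (p ^ 2 - s ^ 2)) - (c - 1) * p))
      = rhigh ϖ p s c := by
    filter_upwards [self_mem_nhdsWithin] with c hc
    have hc : (0:ℝ) < c := hc
    have hD := D_pos hs hsp hc
    have hsq := Real.sq_sqrt hD.le
    have hden : 0 < Real.sqrt ((c - 1) ^ 2 * p ^ 2 + 4 * c * (p ^ 2 - s ^ 2)) - (c - 1) * p := by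
      have : (c - 1) * p < Real.sqrt ((c - 1) ^ 2 * p ^ 2 + 4 * c * (p ^ 2 - s ^ 2)) := by
        apply lt_sqrt_of_sq_lt; nlinarith [mul_pos hc hps]
      linarith
    rw [rhigh, div_eq_div_iff (by positivity) (by positivity)]
    linear_combination -ϖ * hsq
  have hdenc : Tendsto (fun c : ℝ =>
      ϖ * (Real.sqrt ((c - 1) ^ 2 * p ^ 2 + 4 * c * (p ^ 2 - s ^ 2)) - (c - 1) * p))
      (nhds 0) (nhds (2 * ϖ * p)) := by
    have hcont : Continuous fun c : ℝ =>
        ϖ * (Real.sqrt ((c - 1) ^ 2 * p ^ 2 + 4 * c * (p ^ 2 - s ^ 2)) - (c - 1) * p) :=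
      Continuous.mul continuous_const ((cont_num p s).sub (by continuity))
    convert hcont.tendsto 0 using 2
    rw [show ((0 - 1 : ℝ)) ^ 2 * p ^ 2 + 4 * 0 * (p ^ 2 - s ^ 2) = p ^ 2 by ring,
      Real.sqrt_sq hp.le]
    ring
  have hT : Tendsto (fun c : ℝ => 2 * (p ^ 2 - s ^ 2) /
      (ϖ * (Real.sqrt ((c - 1) ^ 2 * p ^ 2 + 4 * c * (p ^ 2 - s ^ 2)) - (c - 1) * p)))
      (nhdsWithin 0 (Set.Ioi 0)) (nhds (2 * (p ^ 2 - s ^ 2) / (2 * ϖ * p))) :=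
    (tendsto_const_nhds.div (hdenc.mono_left nhdsWithin_le_nhds) (by positivity))
  have hval2 : 2 * (p ^ 2 - s ^ 2) / (2 * ϖ * p) = (p ^ 2 - s ^ 2) / (ϖ * p) := by
    rw [div_eq_div_iff (by positivity) (by positivity)]; ring
  rw [hval2] at hT
  exact hT.congr' heq

lemma rhigh_tendsto_atTop (hϖ : 0 < ϖ) (hs : 0 < s) (hsp : s < p) :
    Tendsto (fun c => rhigh ϖ p s c) atTop (nhds (p / ϖ)) := by
  have hp : 0 < p := lt_trans hs hsp
  set F : ℝ → ℝ := fun u =>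
    ((1 - u) * p + Real.sqrt ((1 - u) ^ 2 * p ^ 2 + 4 * u * (p ^ 2 - s ^ 2))) / (2 * ϖ) with hF
  have hFc : Continuous F :=
    (Continuous.add (by continuity) (Continuous.sqrt (by continuity))).div_const _
  have hF0 : F 0 = p / ϖ := by
    rw [hF]
    simp only
    rw [show ((1:ℝ) - 0) ^ 2 * p ^ 2 + 4 * 0 * (p ^ 2 - s ^ 2) = p ^ 2 by ring,
      Real.sqrt_sq hp.le]
    field_simp
    ring
  have hcomp : Tendsto (fun c : ℝ => F c⁻¹) atTop (nhds (p / ϖ)) := by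
    rw [← hF0]
    exact (hFc.tendsto 0).comp tendsto_inv_atTop_zero
  apply hcomp.congr'
  filter_upwards [eventually_gt_atTop (0:ℝ)] with c hc
  have hD := D_pos hs hsp hc
  have harg : (1 - c⁻¹) ^ 2 * p ^ 2 + 4 * c⁻¹ * (p ^ 2 - s ^ 2)
      = ((c - 1) ^ 2 * p ^ 2 + 4 * c * (p ^ 2 - s ^ 2)) * (c⁻¹) ^ 2 := by
    field_simp
  have hsqrt : Real.sqrt (((c - 1) ^ 2 * p ^ 2 + 4 * c * (p ^ 2 - s ^ 2)) * (c⁻¹) ^ 2)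
      = Real.sqrt ((c - 1) ^ 2 * p ^ 2 + 4 * c * (p ^ 2 - s ^ 2)) * c⁻¹ := by
    rw [Real.sqrt_mul hD.le, Real.sqrt_sq (by positivity)]
  rw [hF]
  simp only
  rw [harg, hsqrt, rhigh]
  have hinv : c * c⁻¹ = 1 := mul_inv_cancel₀ hc.ne'
  rw [div_eq_div_iff (by positivity) (by positivity)]
  linear_combination (-2 * ϖ * (p - Real.sqrt ((c - 1) ^ 2 * p ^ 2 + 4 * c * (p ^ 2 - s ^ 2)))) * hinv

end params

lemma ciSup_fin_eq_sup' {ι : Type*} [Fintype ι] [Nonempty ι] (f : ι → ℝ) :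
    (⨆ i, f i) = Finset.univ.sup' Finset.univ_nonempty f :=
  le_antisymm (ciSup_le fun i => Finset.le_sup' f (Finset.mem_univ i))
    (Finset.sup'_le _ _ fun i _ => le_ciSup (Set.Finite.bddAbove (Set.finite_range f)) i)

lemma continuousOn_fin_ciSup {ι : Type*} [Fintype ι] [Nonempty ι] {S : Set ℝ} {f : ι → ℝ → ℝ}
    (hf : ∀ i, ContinuousOn (f i) S) : ContinuousOn (fun x => ⨆ i, f i x) S := by
  have h : ContinuousOn (fun x => Finset.univ.sup' Finset.univ_nonempty fun i => f i x) S := by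
    refine Finset.Nonempty.cons_induction
      (motive := fun t ht => ContinuousOn (fun x => t.sup' ht fun i => f i x) S)
      (fun a => by simpa using hf a) (fun a t h ht ih => ?_) Finset.univ_nonempty
    exact ((hf a).sup ih).congr fun x _ => Finset.sup'_cons ht (fun i => f i x)
  exact h.congr fun x _ => ciSup_fin_eq_sup' _


/-- monotonicity and limits of the functions `r_i`, existence of a unique
crossing point `c*` of `η₁` and `η₂`, and optimality of the resulting parameters
`t* = η₂(c*)`, `γ* = c*t*`. -/
theorem stmt17 {n m : ℕ} (hn : 0 < n) (hm : 0 < m)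
    (ω : ℝ) (hω : ω ∈ Set.Icc (0 : ℝ) 1)
    (p s : Fin n ⊕ Fin m → ℝ)
    (hs : ∀ i, 0 < s i) (hps : ∀ i, s i < p i) (hq : ∀ i, 0 < p i - s i) :
    (∀ i : Fin n,
      StrictAntiOn (fun c => rlow (vpi ω) (p (Sum.inl i)) (s (Sum.inl i)) c) (Set.Ioi 0) ∧
      Tendsto (fun c => rlow (vpi ω) (p (Sum.inl i)) (s (Sum.inl i)) c)
        (nhdsWithin 0 (Set.Ioi 0)) atTop ∧
      Tendsto (fun c => rlow (vpi ω) (p (Sum.inl i)) (s (Sum.inl i)) c) atTop (nhds 0)) ∧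
    (∀ i : Fin m,
      StrictMonoOn (fun c => rhigh (vpi ω) (p (Sum.inr i)) (s (Sum.inr i)) c) (Set.Ioi 0) ∧
      Tendsto (fun c => rhigh (vpi ω) (p (Sum.inr i)) (s (Sum.inr i)) c)
        (nhdsWithin 0 (Set.Ioi 0))
        (nhds ((p (Sum.inr i) ^ 2 - s (Sum.inr i) ^ 2) / (vpi ω * p (Sum.inr i)))) ∧
      Tendsto (fun c => rhigh (vpi ω) (p (Sum.inr i)) (s (Sum.inr i)) c) atTop
        (nhds (p (Sum.inr i) / vpi ω))) ∧
    ∃ cstar : ℝ, 0 < cstar ∧ eta1 (vpi ω) p s cstar = eta2 (vpi ω) p s cstar ∧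
      (∀ c : ℝ, 0 < c → eta1 (vpi ω) p s c = eta2 (vpi ω) p s c → c = cstar) ∧
      (∀ t γ : ℝ, 0 < t → 0 < γ →
        (∀ i : Fin n,
          -(s (Sum.inl i)) ^ 2 / (vpi ω) ^ 2 <
            (t + p (Sum.inl i) / vpi ω) * (γ - p (Sum.inl i) / vpi ω) ∧
          (p (Sum.inl i) - s (Sum.inl i)) / vpi ω < γ) →
        (∀ i : Fin m,
          -(s (Sum.inr i)) ^ 2 / (vpi ω) ^ 2 <
            (γ + p (Sum.inr i) / vpi ω) * (t - p (Sum.inr i) / vpi ω) ∧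
          (p (Sum.inr i) - s (Sum.inr i)) / vpi ω < t) →
        eta2 (vpi ω) p s cstar < t ∧ cstar * eta2 (vpi ω) p s cstar < γ) ∧
      eta2 (vpi ω) p s cstar < ⨆ i : Fin m, p (Sum.inr i) / vpi ω ∧
      cstar * eta2 (vpi ω) p s cstar < ⨆ i : Fin n, p (Sum.inl i) / vpi ω := by
  have hϖ : 0 < vpi ω := by
    rw [vpi]; nlinarith [sq_nonneg (2 * ω - 1)]
  haveI : Nonempty (Fin n) := ⟨⟨0, hn⟩⟩
  haveI : Nonempty (Fin m) := ⟨⟨0, hm⟩⟩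
  have hP : ∀ i, 0 < p i := fun i => (hs i).trans (hps i)
  -- attainment and bounds for the suprema
  have attain1 : ∀ c : ℝ, ∃ i : Fin n,
      eta1 (vpi ω) p s c = rlow (vpi ω) (p (Sum.inl i)) (s (Sum.inl i)) c := by
    intro c
    obtain ⟨i, hi⟩ := exists_eq_ciSup_of_finite
      (f := fun i : Fin n => rlow (vpi ω) (p (Sum.inl i)) (s (Sum.inl i)) c)
    exact ⟨i, by rw [eta1]; exact hi.symm⟩
  have attain2 : ∀ c : ℝ, ∃ i : Fin m,
      eta2 (vpi ω) p s c = rhigh (vpi ω) (p (Sum.inr i)) (s (Sum.inr i)) c := by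
    intro c
    obtain ⟨i, hi⟩ := exists_eq_ciSup_of_finite
      (f := fun i : Fin m => rhigh (vpi ω) (p (Sum.inr i)) (s (Sum.inr i)) c)
    exact ⟨i, by rw [eta2]; exact hi.symm⟩
  have le1 : ∀ (c : ℝ) (i : Fin n),
      rlow (vpi ω) (p (Sum.inl i)) (s (Sum.inl i)) c ≤ eta1 (vpi ω) p s c := fun c i => by
    rw [eta1]
    exact le_ciSup (f := fun i : Fin n => rlow (vpi ω) (p (Sum.inl i)) (s (Sum.inl i)) c)
      (Set.Finite.bddAbove (Set.finite_range _)) i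
  have le2 : ∀ (c : ℝ) (i : Fin m),
      rhigh (vpi ω) (p (Sum.inr i)) (s (Sum.inr i)) c ≤ eta2 (vpi ω) p s c := fun c i => by
    rw [eta2]
    exact le_ciSup (f := fun i : Fin m => rhigh (vpi ω) (p (Sum.inr i)) (s (Sum.inr i)) c)
      (Set.Finite.bddAbove (Set.finite_range _)) i
  have mono1 : StrictAntiOn (eta1 (vpi ω) p s) (Set.Ioi 0) := by
    intro a ha b hb hab
    obtain ⟨i, hi⟩ := attain1 b
    calc eta1 (vpi ω) p s b = rlow (vpi ω) (p (Sum.inl i)) (s (Sum.inl i)) b := hi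
    _ < rlow (vpi ω) (p (Sum.inl i)) (s (Sum.inl i)) a :=
        rlow_strictAntiOn hϖ (hs _) (hps _) ha hb hab
    _ ≤ eta1 (vpi ω) p s a := le1 a i
  have mono2 : StrictMonoOn (eta2 (vpi ω) p s) (Set.Ioi 0) := by
    intro a ha b hb hab
    obtain ⟨i, hi⟩ := attain2 a
    calc eta2 (vpi ω) p s a = rhigh (vpi ω) (p (Sum.inr i)) (s (Sum.inr i)) a := hi
    _ < rhigh (vpi ω) (p (Sum.inr i)) (s (Sum.inr i)) b :=
        rhigh_strictMonoOn hϖ (hs _) (hps _) ha hb hab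
    _ ≤ eta2 (vpi ω) p s b := le2 b i
  have cont1 : ContinuousOn (eta1 (vpi ω) p s) (Set.Ioi 0) := by
    exact continuousOn_fin_ciSup
      (f := fun (i : Fin n) c => rlow (vpi ω) (p (Sum.inl i)) (s (Sum.inl i)) c)
      fun i => rlow_continuousOn hϖ
  have cont2 : ContinuousOn (eta2 (vpi ω) p s) (Set.Ioi 0) := by
    exact continuousOn_fin_ciSup
      (f := fun (i : Fin m) c => rhigh (vpi ω) (p (Sum.inr i)) (s (Sum.inr i)) c)
      fun i => rhigh_continuousOn hϖ
  have eta2_pos : ∀ c : ℝ, 0 < c → 0 < eta2 (vpi ω) p s c := by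
    intro c hc
    exact lt_of_lt_of_le (rhigh_pos hϖ (hs _) (hps _) hc) (le2 c ⟨0, hm⟩)
  -- find a point a where eta1 > eta2
  obtain ⟨a, haev, ha01⟩ :=
    (((rlow_tendsto_zero hϖ (hs (Sum.inl ⟨0, hn⟩)) (hps _)).eventually_gt_atTop
        (eta2 (vpi ω) p s 1)).and
      (Filter.eventually_of_mem (Ioo_mem_nhdsGT_of_mem ⟨le_refl (0:ℝ), zero_lt_one⟩)
        fun x hx => hx)).exists
  have ha0 : (0:ℝ) < a := ha01.1
  have ha1 : a < 1 := ha01.2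
  have hφa : eta2 (vpi ω) p s a < eta1 (vpi ω) p s a := by
    have h1 : eta2 (vpi ω) p s a ≤ eta2 (vpi ω) p s 1 :=
      (mono2 ha0 (by norm_num : (1:ℝ) ∈ Set.Ioi 0) ha1).le
    exact lt_of_le_of_lt h1 (lt_of_lt_of_le haev (le1 a ⟨0, hn⟩))
  -- find a point b where eta1 < eta2
  obtain ⟨b, hb1, hb2⟩ := ((eventually_ge_atTop (1:ℝ)).and (eventually_all.2 fun i : Fin n =>
    (rlow_tendsto_atTop hϖ (hs (Sum.inl i)) (hps _)).eventually_lt_const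
      (eta2_pos 1 one_pos))).exists
  have hb0 : (0:ℝ) < b := lt_of_lt_of_le one_pos hb1
  have hφb : eta1 (vpi ω) p s b < eta2 (vpi ω) p s b := by
    obtain ⟨i, hi⟩ := attain1 b
    have h1 : eta2 (vpi ω) p s 1 ≤ eta2 (vpi ω) p s b := by
      rcases eq_or_lt_of_le hb1 with h | h
      · rw [← h]
      · exact (mono2 (by norm_num : (1:ℝ) ∈ Set.Ioi 0) hb0 h).le
    rw [hi]
    exact lt_of_lt_of_le (hb2 i) h1
  -- intermediate value theorem
  have hab : a ≤ b := le_trans ha1.le hb1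
  have hsub : Set.Icc a b ⊆ Set.Ioi 0 := fun x hx => lt_of_lt_of_le ha0 hx.1
  have hcont : ContinuousOn (fun c => eta1 (vpi ω) p s c - eta2 (vpi ω) p s c) (Set.Icc a b) :=
    (cont1.mono hsub).sub (cont2.mono hsub)
  have h0mem : (0:ℝ) ∈ Set.Icc ((fun c => eta1 (vpi ω) p s c - eta2 (vpi ω) p s c) b)
      ((fun c => eta1 (vpi ω) p s c - eta2 (vpi ω) p s c) a) := by
    constructor
    · simp only; linarith
    · simp only; linarith
  obtain ⟨cstar, hcmem, hceq⟩ := intermediate_value_Icc' hab hcont h0mem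
  have hc0 : (0:ℝ) < cstar := lt_of_lt_of_le ha0 hcmem.1
  have hcross : eta1 (vpi ω) p s cstar = eta2 (vpi ω) p s cstar := by
    have := hceq
    simp only at this
    linarith
  have hcIoi : cstar ∈ Set.Ioi (0:ℝ) := hc0
  refine ⟨fun i => ⟨rlow_strictAntiOn hϖ (hs _) (hps _), rlow_tendsto_zero hϖ (hs _) (hps _),
      rlow_tendsto_atTop hϖ (hs _) (hps _)⟩,
    fun i => ⟨rhigh_strictMonoOn hϖ (hs _) (hps _), rhigh_tendsto_zero hϖ (hs _) (hps _),
      rhigh_tendsto_atTop hϖ (hs _) (hps _)⟩,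
    cstar, hc0, hcross, ?_, ?_, ?_, ?_⟩
  · -- uniqueness
    intro c hcpos hceq'
    by_contra hne
    rcases lt_or_gt_of_ne hne with h | h
    · have h1 : eta1 (vpi ω) p s cstar < eta1 (vpi ω) p s c := mono1 hcpos hcIoi h
      have h2 : eta2 (vpi ω) p s c < eta2 (vpi ω) p s cstar := mono2 hcpos hcIoi h
      linarith
    · have h1 : eta1 (vpi ω) p s c < eta1 (vpi ω) p s cstar := mono1 hcIoi hcpos h
      have h2 : eta2 (vpi ω) p s cstar < eta2 (vpi ω) p s c := mono2 hcIoi hcpos h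
      linarith
  · -- optimality
    intro t γ ht hγ H1 H2
    have hc0' : 0 < γ / t := div_pos hγ ht
    have hct : (γ / t) * t = γ := div_mul_cancel₀ γ ht.ne'
    have hct2 : (γ / t) * t ^ 2 = γ * t := by rw [pow_two, ← mul_assoc, hct]
    have claim_low : ∀ i : Fin n,
        rlow (vpi ω) (p (Sum.inl i)) (s (Sum.inl i)) (γ / t) < t := by
      intro i
      have h := (H1 i).1
      have h' : (vpi ω) ^ 2 * (-(s (Sum.inl i)) ^ 2 / (vpi ω) ^ 2)
          < (vpi ω) ^ 2 * ((t + p (Sum.inl i) / vpi ω) * (γ - p (Sum.inl i) / vpi ω)) :=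
        mul_lt_mul_of_pos_left h (by positivity)
      have e1 : (vpi ω) ^ 2 * (-(s (Sum.inl i)) ^ 2 / (vpi ω) ^ 2) = -(s (Sum.inl i)) ^ 2 := by
        field_simp
      have e2 : (vpi ω) ^ 2 * ((t + p (Sum.inl i) / vpi ω) * (γ - p (Sum.inl i) / vpi ω))
          = (vpi ω) ^ 2 * t * γ + (vpi ω) * p (Sum.inl i) * γ - (vpi ω) * p (Sum.inl i) * t
            - (p (Sum.inl i)) ^ 2 := by
        field_simp; ring
      rw [e1, e2] at h'
      rw [rlow_lt_iff hϖ (hs _) (hps _) hc0' ht]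
      have key : (γ / t) * (vpi ω) ^ 2 * t ^ 2 + ((γ / t) - 1) * p (Sum.inl i) * (vpi ω) * t
          - ((p (Sum.inl i)) ^ 2 - (s (Sum.inl i)) ^ 2)
          = ((vpi ω) ^ 2 * t * γ + (vpi ω) * p (Sum.inl i) * γ - (vpi ω) * p (Sum.inl i) * t
            - (p (Sum.inl i)) ^ 2) + (s (Sum.inl i)) ^ 2 := by
        linear_combination (vpi ω) ^ 2 * hct2 + p (Sum.inl i) * (vpi ω) * hct
      rw [key]
      linarith
    have claim_high : ∀ i : Fin m,
        rhigh (vpi ω) (p (Sum.inr i)) (s (Sum.inr i)) (γ / t) < t := by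
      intro i
      have h := (H2 i).1
      have h' : (vpi ω) ^ 2 * (-(s (Sum.inr i)) ^ 2 / (vpi ω) ^ 2)
          < (vpi ω) ^ 2 * ((γ + p (Sum.inr i) / vpi ω) * (t - p (Sum.inr i) / vpi ω)) :=
        mul_lt_mul_of_pos_left h (by positivity)
      have e1 : (vpi ω) ^ 2 * (-(s (Sum.inr i)) ^ 2 / (vpi ω) ^ 2) = -(s (Sum.inr i)) ^ 2 := by
        field_simp
      have e2 : (vpi ω) ^ 2 * ((γ + p (Sum.inr i) / vpi ω) * (t - p (Sum.inr i) / vpi ω))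
          = (vpi ω) ^ 2 * t * γ + (vpi ω) * p (Sum.inr i) * t - (vpi ω) * p (Sum.inr i) * γ
            - (p (Sum.inr i)) ^ 2 := by
        field_simp; ring
      rw [e1, e2] at h'
      rw [rhigh_lt_iff hϖ (hs _) (hps _) hc0' ht]
      have key : (γ / t) * (vpi ω) ^ 2 * t ^ 2 - ((γ / t) - 1) * p (Sum.inr i) * (vpi ω) * t
          - ((p (Sum.inr i)) ^ 2 - (s (Sum.inr i)) ^ 2)
          = ((vpi ω) ^ 2 * t * γ + (vpi ω) * p (Sum.inr i) * t - (vpi ω) * p (Sum.inr i) * γ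
            - (p (Sum.inr i)) ^ 2) + (s (Sum.inr i)) ^ 2 := by
        linear_combination (vpi ω) ^ 2 * hct2 - p (Sum.inr i) * (vpi ω) * hct
      rw [key]
      linarith
    have hη1c : eta1 (vpi ω) p s (γ / t) < t := by
      obtain ⟨i, hi⟩ := attain1 (γ / t); rw [hi]; exact claim_low i
    have hη2c : eta2 (vpi ω) p s (γ / t) < t := by
      obtain ⟨i, hi⟩ := attain2 (γ / t); rw [hi]; exact claim_high i
    have htstar : eta2 (vpi ω) p s cstar < t := by
      rcases le_or_gt cstar (γ / t) with h | h
      · have hle : eta2 (vpi ω) p s cstar ≤ eta2 (vpi ω) p s (γ / t) := by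
          rcases eq_or_lt_of_le h with h' | h'
          · rw [h']
          · exact (mono2 hcIoi hc0' h').le
        exact lt_of_le_of_lt hle hη2c
      · have h1 : eta1 (vpi ω) p s cstar < eta1 (vpi ω) p s (γ / t) := mono1 hc0' hcIoi h
        rw [← hcross]
        exact lt_trans h1 hη1c
    refine ⟨htstar, ?_⟩
    rcases le_or_gt cstar (γ / t) with h | h
    · have h1 : cstar * eta2 (vpi ω) p s cstar < cstar * t :=
        mul_lt_mul_of_pos_left htstar hc0
      have h2 : cstar * t ≤ (γ / t) * t := mul_le_mul_of_nonneg_right h ht.le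
      rw [hct] at h2
      linarith
    · -- swapped argument
      have hti : (γ / t)⁻¹ * γ = t := by
        rw [inv_div, div_mul_cancel₀ t hγ.ne']
      have hti2 : (γ / t)⁻¹ * γ ^ 2 = t * γ := by rw [pow_two, ← mul_assoc, hti]
      have hinv0 : (0:ℝ) < (γ / t)⁻¹ := by positivity
      have hinvlt : cstar⁻¹ < (γ / t)⁻¹ := by
        rw [inv_lt_inv₀ hc0 hc0']
        exact h
      have hcinv0 : (0:ℝ) < cstar⁻¹ := by positivity
      have claim_sw : ∀ i : Fin n,
          rhigh (vpi ω) (p (Sum.inl i)) (s (Sum.inl i)) ((γ / t)⁻¹) < γ := by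
        intro i
        have hcond := (H1 i).1
        have h' : (vpi ω) ^ 2 * (-(s (Sum.inl i)) ^ 2 / (vpi ω) ^ 2)
            < (vpi ω) ^ 2 * ((t + p (Sum.inl i) / vpi ω) * (γ - p (Sum.inl i) / vpi ω)) :=
          mul_lt_mul_of_pos_left hcond (by positivity)
        have e1 : (vpi ω) ^ 2 * (-(s (Sum.inl i)) ^ 2 / (vpi ω) ^ 2) = -(s (Sum.inl i)) ^ 2 := by
          field_simp
        have e2 : (vpi ω) ^ 2 * ((t + p (Sum.inl i) / vpi ω) * (γ - p (Sum.inl i) / vpi ω))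
            = (vpi ω) ^ 2 * t * γ + (vpi ω) * p (Sum.inl i) * γ - (vpi ω) * p (Sum.inl i) * t
              - (p (Sum.inl i)) ^ 2 := by
          field_simp; ring
        rw [e1, e2] at h'
        rw [rhigh_lt_iff hϖ (hs _) (hps _) hinv0 hγ]
        have key : (γ / t)⁻¹ * (vpi ω) ^ 2 * γ ^ 2
            - ((γ / t)⁻¹ - 1) * p (Sum.inl i) * (vpi ω) * γ
            - ((p (Sum.inl i)) ^ 2 - (s (Sum.inl i)) ^ 2)
            = ((vpi ω) ^ 2 * t * γ + (vpi ω) * p (Sum.inl i) * γ - (vpi ω) * p (Sum.inl i) * t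
              - (p (Sum.inl i)) ^ 2) + (s (Sum.inl i)) ^ 2 := by
          linear_combination (vpi ω) ^ 2 * hti2 - p (Sum.inl i) * (vpi ω) * hti
        rw [key]
        linarith
      obtain ⟨i, hi⟩ := attain1 cstar
      have hchain : cstar * rlow (vpi ω) (p (Sum.inl i)) (s (Sum.inl i)) cstar < γ := by
        rw [← rhigh_inv_eq hϖ (hs _) (hps _) hc0]
        calc rhigh (vpi ω) (p (Sum.inl i)) (s (Sum.inl i)) cstar⁻¹
            < rhigh (vpi ω) (p (Sum.inl i)) (s (Sum.inl i)) ((γ / t)⁻¹) :=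
              rhigh_strictMonoOn hϖ (hs _) (hps _) hcinv0 hinv0 hinvlt
          _ < γ := claim_sw i
      rw [← hcross, hi]
      exact hchain
  · -- eta2 cstar < sup p/ϖ over Fin m
    obtain ⟨i, hi⟩ := attain2 cstar
    rw [hi]
    exact lt_of_lt_of_le (rhigh_lt_top hϖ (hs _) (hps _) hc0)
      (le_ciSup (f := fun i : Fin m => p (Sum.inr i) / vpi ω)
        (Set.Finite.bddAbove (Set.finite_range _)) i)
  · -- cstar * eta2 cstar < sup p/ϖ over Fin n
    obtain ⟨i, hi⟩ := attain1 cstar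
    rw [← hcross, hi, ← rhigh_inv_eq hϖ (hs _) (hps _) hc0]
    exact lt_of_lt_of_le (rhigh_lt_top hϖ (hs _) (hps _) (inv_pos.2 hc0))
      (le_ciSup (f := fun i : Fin n => p (Sum.inl i) / vpi ω)
        (Set.Finite.bddAbove (Set.finite_range _)) i)
end
end

section
/- Let ω ∈ [0,1], ϖ = ω² + (1−ω)², and let φ ∈ [0, π/2] satisfy cos(φ) = ω/√ϖ and sin(φ) = (1−ω)/√ϖ. Let d_1,…,d_N be nonzero complex numbers with arguments φ_i = arg(d_i) ∈ (φ − π/2, φ + π/2) and let q_1,…,q_N ≥ 0 satisfy ω·Re(d_i) + (1−ω)·Im(d_i) > q_i for each i (in particular ϖ|d_i|² > q_i²). For θ ∈ R define f_i(θ) = (ϖ|d_i|² − q_i²)/(ϖ(|d_i|·√ϖ·cos(φ_i − φ − θ) − q_i)) and f(θ) = max_{1≤i≤N} f_i(θ), on the feasible set of θ ∈ (−π, π) for which |d_i|·√ϖ·cos(φ_i − φ − θ) − q_i > 0 for all i (i.e., ω·Re(e^{−jθ}d_i) + (1−ω)·Im(e^{−jθ}d_i) > q_i for all i). Then f attains its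 minimum over the feasible set at a unique point θ* ∈ (−π, π), and θ* lies in the interval [min_i φ_i − φ, max_i φ_i − φ]. -/
open Matrix Filter Kronecker

noncomputable section

lemma aux_abs_lt_pi_div_two_of_cos_pos {x : ℝ} (hx : |x| < Real.pi + Real.pi / 2)
    (h : 0 < Real.cos x) : |x| < Real.pi / 2 := by
  by_contra hc
  push_neg at hc
  have h2 := Real.cos_nonpos_of_pi_div_two_le_of_le hc hx.le
  rw [Real.cos_abs] at h2
  linarith

lemma aux_inv_mid {c p x y : ℝ} (hc : 0 < c) (hp : 0 < p) (hx : 0 < x) (hy : 0 < y) :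
    c / (p * ((x + y) / 2)) ≤ (c / (p * x) + c / (p * y)) / 2 := by
  rw [div_add_div _ _ (by positivity) (by positivity), div_div,
    div_le_div_iff₀ (by positivity) (by positivity)]
  nlinarith [mul_nonneg (mul_nonneg hc.le (mul_pos hp hp).le) (sq_nonneg (x - y))]

set_option maxHeartbeats 1000000 in
/-- the function `f(θ) = max_i f_i(θ)` attains its minimum over the feasible set
of rotations at a unique point `θ* ∈ (−π, π)`, lying in `[min_i φ_i − φ, max_i φ_i − φ]`. -/
theorem stmt18 {N : ℕ} (hN : 0 < N) (ω : ℝ) (hω : ω ∈ Set.Icc (0 : ℝ) 1)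
    (φ : ℝ) (hφmem : φ ∈ Set.Icc 0 (Real.pi / 2))
    (hcos : Real.cos φ = ω / Real.sqrt (vpi ω))
    (hsin : Real.sin φ = (1 - ω) / Real.sqrt (vpi ω))
    (d : Fin N → ℂ) (hd : ∀ i, d i ≠ 0)
    (harg : ∀ i, Complex.arg (d i) ∈ Set.Ioo (φ - Real.pi / 2) (φ + Real.pi / 2))
    (q : Fin N → ℝ) (hq : ∀ i, 0 ≤ q i) (hdq : ∀ i, q i < wlin ω (d i)) :
    let Feas : Set ℝ := {θ | θ ∈ Set.Ioo (-Real.pi) Real.pi ∧ ∀ i, q i <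
      ‖d i‖ * Real.sqrt (vpi ω) * Real.cos (Complex.arg (d i) - φ - θ)}
    let f : ℝ → ℝ := fun θ => ⨆ i, (vpi ω * ‖d i‖ ^ 2 - q i ^ 2) /
      (vpi ω * (‖d i‖ * Real.sqrt (vpi ω) *
        Real.cos (Complex.arg (d i) - φ - θ) - q i))
    (∃! θstar : ℝ, θstar ∈ Feas ∧ ∀ θ ∈ Feas, f θstar ≤ f θ) ∧
    ∀ θstar : ℝ, (θstar ∈ Feas ∧ ∀ θ ∈ Feas, f θstar ≤ f θ) →
      θstar ∈ Set.Icc ((⨅ i, Complex.arg (d i)) - φ) ((⨆ i, Complex.arg (d i)) - φ) := by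
  intro Feas f
  have hπ := Real.pi_pos
  have hϖ : 0 < vpi ω := by unfold vpi; nlinarith [sq_nonneg ω, sq_nonneg (1 - ω)]
  haveI : Nonempty (Fin N) := ⟨⟨0, hN⟩⟩
  set s : ℝ := Real.sqrt (vpi ω) with hsdef
  have hs0 : 0 < s := Real.sqrt_pos.2 hϖ
  have hs2 : s ^ 2 = vpi ω := Real.sq_sqrt hϖ.le
  set ψ : Fin N → ℝ := fun i => Complex.arg (d i) - φ with hψdef
  set a : Fin N → ℝ := fun i => ‖d i‖ with hadef
  have ha : ∀ i, 0 < a i := fun i => norm_pos_iff.2 (hd i)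
  set g : Fin N → ℝ → ℝ := fun i θ => a i * s * Real.cos (ψ i - θ) - q i with hgdef
  set C : Fin N → ℝ := fun i => vpi ω * a i ^ 2 - q i ^ 2 with hCdef
  set fi : Fin N → ℝ → ℝ := fun i θ => C i / (vpi ω * g i θ) with hfidef
  have hGc : ∀ i, Continuous (g i) := by
    intro i
    exact ((continuous_const.mul (Real.continuous_cos.comp
      (continuous_const.sub continuous_id))).sub continuous_const)
  have hFeas : ∀ θ, θ ∈ Feas ↔ (θ ∈ Set.Ioo (-Real.pi) Real.pi ∧ ∀ i, 0 < g i θ) := by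
    intro θ
    simp only [Feas, Set.mem_setOf_eq, hgdef, sub_pos]
    exact Iff.rfl
  have hfθ : ∀ θ, f θ = ⨆ i, fi i θ := fun θ => rfl
  clear_value s ψ a g C fi
  have hψlt : ∀ i, |ψ i| < Real.pi / 2 := by
    intro i
    rw [abs_lt]
    constructor
    · have := (harg i).1; simp only [hψdef]; linarith
    · have := (harg i).2; simp only [hψdef]; linarith
  have hsne : s ≠ 0 := hs0.ne'
  have hsc : s * Real.cos φ = ω := by rw [hcos]; field_simp
  have hss : s * Real.sin φ = 1 - ω := by rw [hsin]; field_simp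
  have hwlin : ∀ i, wlin ω (d i) = a i * s * Real.cos (ψ i) := by
    intro i
    have h1 := Complex.norm_mul_cos_arg (d i)
    have h2 := Complex.norm_mul_sin_arg (d i)
    show ω * (d i).re + (1 - ω) * (d i).im = _
    simp only [hψdef, hadef]
    rw [Real.cos_sub, ← h1, ← h2, ← hss, ← hsc]
    ring
  have h0F : (0 : ℝ) ∈ Feas := by
    rw [hFeas]
    refine ⟨⟨by linarith, hπ⟩, fun i => ?_⟩
    have := hdq i
    rw [hwlin i] at this
    simp only [hgdef, sub_zero]
    linarith
  have hC : ∀ i, 0 < C i := by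
    intro i
    have h1 := hdq i
    rw [hwlin i] at h1
    have h2 : Real.cos (ψ i) ≤ 1 := Real.cos_le_one _
    have h3 : q i < a i * s := by nlinarith [mul_pos (ha i) hs0]
    simp only [hCdef]
    nlinarith [hq i, mul_pos (ha i) hs0]
  have hang : ∀ θ, θ ∈ Feas → ∀ i, |ψ i - θ| < Real.pi / 2 := by
    intro θ hθ i
    obtain ⟨hIoo, hpos⟩ := (hFeas θ).1 hθ
    have hcosp : 0 < Real.cos (ψ i - θ) := by
      by_contra h
      push_neg at h
      have := hpos i
      simp only [hgdef] at this
      nlinarith [hq i, mul_pos (ha i) hs0, mul_nonpos_of_nonneg_of_nonpos (mul_pos (ha i) hs0).le h]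
    apply aux_abs_lt_pi_div_two_of_cos_pos _ hcosp
    have h1 := abs_lt.1 (hψlt i)
    obtain ⟨h2, h3⟩ := hIoo
    rw [abs_lt]
    constructor <;> linarith
  have hgposF : ∀ θ, θ ∈ Feas → ∀ i, 0 < g i θ := fun θ hθ => ((hFeas θ).1 hθ).2
  have hfile : ∀ θ (i : Fin N), fi i θ ≤ f θ := by
    intro θ i
    rw [hfθ]
    exact le_ciSup (f := fun j => fi j θ) (Set.Finite.bddAbove (Set.finite_range _)) i
  have hfeq : ∀ θ, ∃ i, f θ = fi i θ := by
    intro θ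
    obtain ⟨i, hi⟩ := exists_eq_ciSup_of_finite (f := fun i => fi i θ)
    exact ⟨i, (hfθ θ).trans hi.symm⟩
  have hfipos : ∀ θ, θ ∈ Feas → ∀ i, 0 < fi i θ := by
    intro θ hθ i
    simp only [hfidef]
    exact div_pos (hC i) (mul_pos hϖ (hgposF θ hθ i))
  have hfpos : ∀ θ, θ ∈ Feas → 0 < f θ := by
    intro θ hθ
    obtain ⟨i, hi⟩ := hfeq θ
    rw [hi]; exact hfipos θ hθ i
  -- monotonicity
  have hmonL : ∀ (i : Fin N) θ1 θ2, θ1 ∈ Feas → θ2 ∈ Feas → θ1 < θ2 → θ2 ≤ ψ i →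
      fi i θ2 < fi i θ1 := by
    intro i θ1 θ2 h1 h2 hlt hle
    obtain ⟨hx1a, hx1b⟩ := abs_lt.1 (hang θ1 h1 i)
    have hb1 : ψ i - θ1 ≤ Real.pi := by linarith
    have key : Real.cos (ψ i - θ1) < Real.cos (ψ i - θ2) :=
      Real.cos_lt_cos_of_nonneg_of_le_pi (by linarith) (by linarith) (by linarith)
    have hg12 : g i θ1 < g i θ2 := by
      simp only [hgdef]
      have := mul_lt_mul_of_pos_left key (mul_pos (ha i) hs0)
      linarith
    simp only [hfidef]
    exact div_lt_div_of_pos_left (hC i) (mul_pos hϖ (hgposF θ1 h1 i))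
      (mul_lt_mul_of_pos_left hg12 hϖ)
  have hmonR : ∀ (i : Fin N) θ1 θ2, θ1 ∈ Feas → θ2 ∈ Feas → θ1 < θ2 → ψ i ≤ θ1 →
      fi i θ1 < fi i θ2 := by
    intro i θ1 θ2 h1 h2 hlt hle
    obtain ⟨hx2a, hx2b⟩ := abs_lt.1 (hang θ2 h2 i)
    have key : Real.cos (θ2 - ψ i) < Real.cos (θ1 - ψ i) :=
      Real.cos_lt_cos_of_nonneg_of_le_pi (by linarith) (by linarith) (by linarith)
    rw [← neg_sub (ψ i) θ2, Real.cos_neg, ← neg_sub (ψ i) θ1, Real.cos_neg] at key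
    have hg12 : g i θ2 < g i θ1 := by
      simp only [hgdef]
      have := mul_lt_mul_of_pos_left key (mul_pos (ha i) hs0)
      linarith
    simp only [hfidef]
    exact div_lt_div_of_pos_left (hC i) (mul_pos hϖ (hgposF θ2 h2 i))
      (mul_lt_mul_of_pos_left hg12 hϖ)
  -- midpoint feasibility
  have hmidF : ∀ θ1 θ2, θ1 ∈ Feas → θ2 ∈ Feas → (θ1 + θ2) / 2 ∈ Feas := by
    intro θ1 θ2 h1 h2
    obtain ⟨hI1, hp1⟩ := (hFeas θ1).1 h1
    obtain ⟨hI2, hp2⟩ := (hFeas θ2).1 h2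
    rw [hFeas]
    refine ⟨⟨by obtain ⟨u1, v1⟩ := hI1; obtain ⟨u2, v2⟩ := hI2; linarith,
      by obtain ⟨u1, v1⟩ := hI1; obtain ⟨u2, v2⟩ := hI2; linarith⟩, fun i => ?_⟩
    have hx1 := abs_lt.1 (hang θ1 h1 i)
    have hx2 := abs_lt.1 (hang θ2 h2 i)
    have hm1 : ψ i - θ1 ∈ Set.Icc (-(Real.pi / 2)) (Real.pi / 2) := ⟨by linarith, by linarith⟩
    have hm2 : ψ i - θ2 ∈ Set.Icc (-(Real.pi / 2)) (Real.pi / 2) := ⟨by linarith, by linarith⟩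
    have hcc := strictConcaveOn_cos_Icc.concaveOn.2 hm1 hm2
      (by norm_num : (0:ℝ) ≤ 1/2) (by norm_num : (0:ℝ) ≤ 1/2) (by norm_num)
    simp only [smul_eq_mul] at hcc
    have heq : (1:ℝ)/2 * (ψ i - θ1) + 1/2 * (ψ i - θ2) = ψ i - (θ1 + θ2) / 2 := by ring
    rw [heq] at hcc
    have hq1 := hp1 i
    have hq2 := hp2 i
    simp only [hgdef] at hq1 hq2 ⊢
    have hmul := mul_le_mul_of_nonneg_left hcc (mul_pos (ha i) hs0).le
    nlinarith
  -- strict midpoint convexity of f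
  have hmid : ∀ θ1 θ2, θ1 ∈ Feas → θ2 ∈ Feas → θ1 ≠ θ2 →
      f ((θ1 + θ2) / 2) < (f θ1 + f θ2) / 2 := by
    intro θ1 θ2 h1 h2 hne
    obtain ⟨i, hi⟩ := hfeq ((θ1 + θ2) / 2)
    rw [hi]
    have hx1 := abs_lt.1 (hang θ1 h1 i)
    have hx2 := abs_lt.1 (hang θ2 h2 i)
    have hm1 : ψ i - θ1 ∈ Set.Icc (-(Real.pi / 2)) (Real.pi / 2) := ⟨by linarith, by linarith⟩
    have hm2 : ψ i - θ2 ∈ Set.Icc (-(Real.pi / 2)) (Real.pi / 2) := ⟨by linarith, by linarith⟩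
    have hxne : ψ i - θ1 ≠ ψ i - θ2 := fun h => hne (by linarith)
    have hcc := strictConcaveOn_cos_Icc.2 hm1 hm2 hxne
      (by norm_num : (0:ℝ) < 1/2) (by norm_num : (0:ℝ) < 1/2) (by norm_num)
    simp only [smul_eq_mul] at hcc
    have heq : (1:ℝ)/2 * (ψ i - θ1) + 1/2 * (ψ i - θ2) = ψ i - (θ1 + θ2) / 2 := by ring
    rw [heq] at hcc
    have hg1 := hgposF θ1 h1 i
    have hg2 := hgposF θ2 h2 i
    have hgm : (g i θ1 + g i θ2) / 2 < g i ((θ1 + θ2) / 2) := by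
      simp only [hgdef]
      have hmul := mul_lt_mul_of_pos_left hcc (mul_pos (ha i) hs0)
      linarith
    have step1 : fi i ((θ1 + θ2) / 2) < C i / (vpi ω * ((g i θ1 + g i θ2) / 2)) := by
      simp only [hfidef]
      exact div_lt_div_of_pos_left (hC i) (mul_pos hϖ (by linarith)) (mul_lt_mul_of_pos_left hgm hϖ)
    have step2 := aux_inv_mid (hC i) hϖ hg1 hg2
    have le1 := hfile θ1 i
    have le2 := hfile θ2 i
    simp only [hfidef] at step1 step2 le1 le2 ⊢
    linarith
  -- continuity
  have hcontfi : ∀ i, ContinuousOn (fi i) Feas := by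
    intro i
    simp only [hfidef]
    apply ContinuousOn.div continuousOn_const
      ((continuous_const.mul (hGc i)).continuousOn)
    intro θ hθ
    exact ne_of_gt (mul_pos hϖ (hgposF θ hθ i))
  have hune : (Finset.univ : Finset (Fin N)).Nonempty := Finset.univ_nonempty
  have hfsup' : ∀ θ, f θ = Finset.univ.sup' hune (fun i => fi i θ) := by
    intro θ
    rw [hfθ]
    apply le_antisymm
    · exact ciSup_le fun i => Finset.le_sup' (f := fun j => fi j θ) (Finset.mem_univ i)
    · exact Finset.sup'_le _ _ fun i _ =>
        le_ciSup (f := fun j => fi j θ) (Set.Finite.bddAbove (Set.finite_range _)) i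
  have hcontf : ContinuousOn f Feas := by
    have h := ContinuousOn.finset_sup'_apply (t := Feas) hune (fun i _ => hcontfi i)
    exact h.congr fun θ _ => hfsup' θ
  -- openness of the feasible set
  have hFeasOpen : IsOpen Feas := by
    have hset : Feas = Set.Ioo (-Real.pi) Real.pi ∩ ⋂ i, (g i) ⁻¹' Set.Ioi 0 := by
      ext θ
      simp only [Set.mem_inter_iff, Set.mem_iInter, Set.mem_preimage, Set.mem_Ioi]
      exact hFeas θ
    rw [hset]
    exact isOpen_Ioo.inter (isOpen_iInter_of_finite fun i =>
      (hGc i).isOpen_preimage _ isOpen_Ioi)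
  have hficont : ∀ (i : Fin N) (x : ℝ), g i x ≠ 0 → ContinuousAt (fi i) x := by
    intro i x hx
    have h : ContinuousAt (fun θ => C i / (vpi ω * g i θ)) x :=
      ContinuousAt.div continuousAt_const ((continuous_const.mul (hGc i)).continuousAt)
        (mul_ne_zero hϖ.ne' hx)
    have heq : fi i = fun θ => C i / (vpi ω * g i θ) := by rw [hfidef]
    rw [heq]
    exact h
  -- the sublevel set K
  set K : Set ℝ := {θ | θ ∈ Feas ∧ f θ ≤ f 0} with hKdef
  have hK0 : (0 : ℝ) ∈ K := ⟨h0F, le_refl _⟩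
  have hKF : K ⊆ Feas := fun θ hθ => hθ.1
  have hKclosed : IsClosed K := by
    rw [← isSeqClosed_iff_isClosed]
    intro u x hu hux
    have hglim : ∀ i, Tendsto (fun n => g i (u n)) atTop (nhds (g i x)) :=
      fun i => ((hGc i).tendsto x).comp hux
    have hgx : ∀ i, 0 ≤ g i x := fun i =>
      ge_of_tendsto (hglim i) (Filter.Eventually.of_forall fun n => (hgposF _ (hu n).1 i).le)
    have hxI : x ∈ Set.Ioo (-Real.pi) Real.pi := by
      obtain ⟨i0⟩ := (inferInstance : Nonempty (Fin N))
      have h1 : ∀ n, ψ i0 - u n ≤ Real.pi / 2 := fun n => (abs_lt.1 (hang _ (hu n).1 i0)).2.le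
      have h2 : ∀ n, -(Real.pi / 2) ≤ ψ i0 - u n := fun n => (abs_lt.1 (hang _ (hu n).1 i0)).1.le
      have hlim : Tendsto (fun n => ψ i0 - u n) atTop (nhds (ψ i0 - x)) :=
        tendsto_const_nhds.sub hux
      have hA := le_of_tendsto hlim (Filter.Eventually.of_forall h1)
      have hB := ge_of_tendsto hlim (Filter.Eventually.of_forall h2)
      obtain ⟨hψa, hψb⟩ := abs_lt.1 (hψlt i0)
      exact ⟨by linarith, by linarith⟩
    by_cases hall : ∀ i, 0 < g i x
    · have hxF : x ∈ Feas := (hFeas x).2 ⟨hxI, hall⟩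
      refine ⟨hxF, ?_⟩
      rw [hfθ]
      refine ciSup_le fun i => ?_
      have hc : ContinuousAt (fi i) x := hficont i x (hall i).ne'
      exact le_of_tendsto (hc.tendsto.comp hux)
        (Filter.Eventually.of_forall fun n => le_trans (hfile (u n) i) (hu n).2)
    · push_neg at hall
      obtain ⟨i, hi⟩ := hall
      have hgi0 : g i x = 0 := le_antisymm hi (hgx i)
      exfalso
      have hf0 : 0 < f 0 := hfpos 0 h0F
      have hpos' : (0 : ℝ) < C i / (vpi ω * f 0) := div_pos (hC i) (mul_pos hϖ hf0)
      have hev : ∀ᶠ n in atTop, g i (u n) < C i / (vpi ω * f 0) :=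
        Filter.Tendsto.eventually_lt_const (by rw [hgi0]; exact hpos') (hglim i)
      obtain ⟨n, hn⟩ := hev.exists
      have hgn : 0 < g i (u n) := hgposF _ (hu n).1 i
      have h2 : g i (u n) * (vpi ω * f 0) < C i := (lt_div_iff₀ (mul_pos hϖ hf0)).1 hn
      have hlt : f 0 < fi i (u n) := by
        simp only [hfidef]
        rw [lt_div_iff₀ (mul_pos hϖ hgn)]
        have heq : f 0 * (vpi ω * g i (u n)) = g i (u n) * (vpi ω * f 0) := by ring
        linarith
      have hle := le_trans (hfile (u n) i) (hu n).2
      linarith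
  have hKcpt : IsCompact K :=
    IsCompact.of_isClosed_subset isCompact_Icc hKclosed
      (fun θ hθ => Set.Ioo_subset_Icc_self ((hFeas θ).1 (hKF hθ)).1)
  obtain ⟨θm, hθmK, hminK⟩ := hKcpt.exists_isMinOn ⟨0, hK0⟩ (hcontf.mono hKF)
  have hθmF : θm ∈ Feas := hθmK.1
  have hminFeas : ∀ θ ∈ Feas, f θm ≤ f θ := by
    intro θ hθ
    rcases le_or_gt (f θ) (f 0) with h | h
    · exact isMinOn_iff.1 hminK θ ⟨hθ, h⟩
    · exact le_trans (isMinOn_iff.1 hminK 0 hK0) h.le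
  have huniq : ∀ θ1, (θ1 ∈ Feas ∧ ∀ θ ∈ Feas, f θ1 ≤ f θ) → θ1 = θm := by
    rintro θ1 ⟨hF1, hm1⟩
    by_contra hne
    have hmF := hmidF θ1 θm hF1 hθmF
    have h12 : f θ1 = f θm := le_antisymm (hm1 θm hθmF) (hminFeas θ1 hF1)
    have hsm := hmid θ1 θm hF1 hθmF hne
    have h1 := hm1 _ hmF
    linarith
  refine ⟨⟨θm, ⟨hθmF, hminFeas⟩, huniq⟩, ?_⟩
  -- location of any minimizer
  rintro θs ⟨hFs, hms⟩
  obtain ⟨ε, hε, hball⟩ := Metric.isOpen_iff.1 hFeasOpen θs hFs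
  rw [Set.mem_Icc]
  constructor
  · by_contra hlt
    push_neg at hlt
    have hlow : ∀ i, θs < ψ i := by
      intro i
      have hle := ciInf_le (f := fun j => Complex.arg (d j))
        (Set.Finite.bddBelow (Set.finite_range _)) i
      have hψi : ψ i = Complex.arg (d i) - φ := congrFun hψdef i
      rw [hψi]
      linarith
    have hθs' : θs < min (θs + ε / 2) ((⨅ i, Complex.arg (d i)) - φ) :=
      lt_min (by linarith) hlt
    have hθ'F : min (θs + ε / 2) ((⨅ i, Complex.arg (d i)) - φ) ∈ Feas := by
      apply hball
      rw [Metric.mem_ball, Real.dist_eq, abs_lt]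
      have h1 : min (θs + ε / 2) ((⨅ i, Complex.arg (d i)) - φ) ≤ θs + ε / 2 :=
        min_le_left _ _
      exact ⟨by linarith, by linarith⟩
    obtain ⟨i, hi⟩ := hfeq (min (θs + ε / 2) ((⨅ i, Complex.arg (d i)) - φ))
    have hle' : min (θs + ε / 2) ((⨅ i, Complex.arg (d i)) - φ) ≤ ψ i := by
      have hle2 := ciInf_le (f := fun j => Complex.arg (d j))
        (Set.Finite.bddBelow (Set.finite_range _)) i
      have hψi : ψ i = Complex.arg (d i) - φ := congrFun hψdef i
      have h3 := min_le_right (θs + ε / 2) ((⨅ i, Complex.arg (d i)) - φ)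
      rw [hψi]
      linarith
    have hstep := hmonL i θs _ hFs hθ'F hθs' hle'
    have hms' := hms _ hθ'F
    have hfs := hfile θs i
    linarith [hi ▸ hms']
  · by_contra hlt
    push_neg at hlt
    have hhigh : ∀ i, ψ i < θs := by
      intro i
      have hle := le_ciSup (f := fun j => Complex.arg (d j))
        (Set.Finite.bddAbove (Set.finite_range _)) i
      have hψi : ψ i = Complex.arg (d i) - φ := congrFun hψdef i
      rw [hψi]
      linarith
    have hθs' : max (θs - ε / 2) ((⨆ i, Complex.arg (d i)) - φ) < θs :=
      max_lt (by linarith) hlt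
    have hθ'F : max (θs - ε / 2) ((⨆ i, Complex.arg (d i)) - φ) ∈ Feas := by
      apply hball
      rw [Metric.mem_ball, Real.dist_eq, abs_lt]
      have h1 : θs - ε / 2 ≤ max (θs - ε / 2) ((⨆ i, Complex.arg (d i)) - φ) :=
        le_max_left _ _
      exact ⟨by linarith, by linarith⟩
    obtain ⟨i, hi⟩ := hfeq (max (θs - ε / 2) ((⨆ i, Complex.arg (d i)) - φ))
    have hle' : ψ i ≤ max (θs - ε / 2) ((⨆ i, Complex.arg (d i)) - φ) := by
      have hle2 := le_ciSup (f := fun j => Complex.arg (d j))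
        (Set.Finite.bddAbove (Set.finite_range _)) i
      have hψi : ψ i = Complex.arg (d i) - φ := congrFun hψdef i
      have h3 := le_max_right (θs - ε / 2) ((⨆ i, Complex.arg (d i)) - φ)
      rw [hψi]
      linarith
    have hstep := hmonR i _ θs hθ'F hFs hθs' hle'
    have hms' := hms _ hθ'F
    have hfs := hfile θs i
    linarith [hi ▸ hms']
end
end

section
/- Let ω ∈ [0,1], ϖ = ω² + (1−ω)², z_ω^⊥ = ω + j(1−ω), c > 0, and let x = a + jb be a complex number with θ := ωa + (1−ω)b > 0. Then the function f_ω(t) = |x − c·t·z_ω^⊥| / |x + t·z_ω^⊥| is monotonically increasing in t on the interval t ≥ T, where T = (−(c−1)ϖ|x|² + √((c−1)²ϖ²|x|⁴ + 4cϖθ²|x|²))/(2cϖθ); moreover, for such t the denominator never vanishes, and f_ω(t)′ ≥ 0 holds exactly when cϖθt² + (c−1)ϖ|x|²t − |x|²θ ≥ 0. -/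
open Matrix Filter Kronecker

noncomputable section

/-- `z_ω^⊥ = ω + j(1−ω)`. -/
def zperp (ω : ℝ) : ℂ := ⟨ω, 1 - ω⟩

set_option maxHeartbeats 1000000

lemma auxMain (ϖ θ X c : ℝ) (hϖ : 0 < ϖ) (hθ : 0 < θ) (hX : 0 < X) (hc : 0 < c)
    (hcs : θ^2 ≤ ϖ * X) :
    MonotoneOn (fun t => Real.sqrt (c^2*ϖ*t^2 - 2*c*θ*t + X) / Real.sqrt (ϖ*t^2 + 2*θ*t + X))
      (Set.Ici ((-(c-1)*ϖ*X + Real.sqrt ((c-1)^2*ϖ^2*X^2 + 4*c*ϖ*θ^2*X))/(2*c*ϖ*θ))) ∧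
    0 < (-(c-1)*ϖ*X + Real.sqrt ((c-1)^2*ϖ^2*X^2 + 4*c*ϖ*θ^2*X))/(2*c*ϖ*θ) ∧
    ∀ t : ℝ, 0 ≤ t →
      (0 ≤ deriv (fun t => Real.sqrt (c^2*ϖ*t^2 - 2*c*θ*t + X) / Real.sqrt (ϖ*t^2 + 2*θ*t + X)) t ↔
       0 ≤ c*ϖ*θ*t^2 + (c-1)*ϖ*X*t - X*θ) := by
  set p : ℝ := (c-1)*ϖ*X with hpdef
  rw [show -(c-1)*ϖ*X = -p by rw [hpdef]; ring]
  have hΔpos : (0:ℝ) < (c-1)^2*ϖ^2*X^2 + 4*c*ϖ*θ^2*X := by positivity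
  set u : ℝ := Real.sqrt ((c-1)^2*ϖ^2*X^2 + 4*c*ϖ*θ^2*X) with huDef
  have hu0 : 0 < u := Real.sqrt_pos.mpr hΔpos
  have hu2 : u^2 = p^2 + 4*c*ϖ*θ^2*X := by
    rw [huDef, Real.sq_sqrt hΔpos.le, hpdef]; ring
  set T : ℝ := (-p + u)/(2*c*ϖ*θ) with hTdef
  have hden : (0:ℝ) < 2*c*ϖ*θ := by positivity
  have hTe : T * (2*c*ϖ*θ) = -p + u := by rw [hTdef]; field_simp
  have hup : p < u := by
    nlinarith [mul_pos (mul_pos (mul_pos hc hϖ) (mul_pos hθ hθ)) hX]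
  have hupn : -u < p := by
    nlinarith [mul_pos (mul_pos (mul_pos hc hϖ) (mul_pos hθ hθ)) hX]
  have hTpos : 0 < T := by rw [hTdef]; exact div_pos (by linarith) hden
  have hQT : c*ϖ*θ*T^2 + p*T - X*θ = 0 := by
    have h4 : (4*c*ϖ*θ) * (c*ϖ*θ*T^2 + p*T - X*θ) = 0 := by
      linear_combination (T*(2*c*ϖ*θ) + (-p+u) + 2*p) * hTe + hu2
    rcases mul_eq_zero.mp h4 with h | h
    · linarith
    · exact h
  have hQfact : ∀ t : ℝ, 2*(c*ϖ*θ*t^2 + p*t - X*θ) = (t - T)*(2*c*ϖ*θ*t + u + p) := by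
    intro t
    linear_combination (t - T)*hTe + 2*hQT
  have hQpos : ∀ t : ℝ, T < t → 0 < c*ϖ*θ*t^2 + p*t - X*θ := by
    intro t ht
    have h1 : 0 < t - T := by linarith
    have h2 : 0 < 2*c*ϖ*θ*t + u + p := by nlinarith
    nlinarith [hQfact t, mul_pos h1 h2]
  have hQnonneg : ∀ t : ℝ, T ≤ t → 0 ≤ c*ϖ*θ*t^2 + p*t - X*θ := by
    intro t ht
    rcases eq_or_lt_of_le ht with h | h
    · rw [← h]; linarith [hQT]
    · exact (hQpos t h).le
  have hNnn : ∀ t : ℝ, 0 ≤ c^2*ϖ*t^2 - 2*c*θ*t + X := by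
    intro t; nlinarith [sq_nonneg (c*ϖ*t - θ)]
  have hD : ∀ t : ℝ, 0 ≤ t → 0 < ϖ*t^2 + 2*θ*t + X := by
    intro t ht; nlinarith [sq_nonneg t]
  set g : ℝ → ℝ := fun t => Real.sqrt (c^2*ϖ*t^2 - 2*c*θ*t + X) / Real.sqrt (ϖ*t^2 + 2*θ*t + X)
    with hgdef
  clear_value g
  have hNder : ∀ t : ℝ, HasDerivAt (fun s : ℝ => c^2*ϖ*s^2 - 2*c*θ*s + X)
      (2*(c^2*ϖ)*t - 2*c*θ) t := by
    intro t
    have h := (((hasDerivAt_pow 2 t).const_mul (c^2*ϖ)).sub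
      ((hasDerivAt_id t).const_mul (2*c*θ))).add_const X
    exact h.congr_deriv (by push_cast; ring)
  have hDder : ∀ t : ℝ, HasDerivAt (fun s : ℝ => ϖ*s^2 + 2*θ*s + X) (2*ϖ*t + 2*θ) t := by
    intro t
    have h := (((hasDerivAt_pow 2 t).const_mul ϖ).add
      ((hasDerivAt_id t).const_mul (2*θ))).add_const X
    exact h.congr_deriv (by push_cast; ring)
  have hgder : ∀ t : ℝ, 0 < c^2*ϖ*t^2 - 2*c*θ*t + X → 0 < ϖ*t^2 + 2*θ*t + X →
      HasDerivAt g
      (((2*(c^2*ϖ)*t - 2*c*θ)/(2*Real.sqrt (c^2*ϖ*t^2 - 2*c*θ*t + X)) * Real.sqrt (ϖ*t^2 + 2*θ*t + X)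
        - Real.sqrt (c^2*ϖ*t^2 - 2*c*θ*t + X) * ((2*ϖ*t + 2*θ)/(2*Real.sqrt (ϖ*t^2 + 2*θ*t + X))))
        / (Real.sqrt (ϖ*t^2 + 2*θ*t + X))^2) t := by
    intro t hN hDt
    rw [hgdef]
    exact (((hNder t).sqrt (ne_of_gt hN)).div ((hDder t).sqrt (ne_of_gt hDt))
      (Real.sqrt_ne_zero'.mpr hDt))
  have hsign : ∀ t : ℝ, 0 < c^2*ϖ*t^2 - 2*c*θ*t + X → 0 < ϖ*t^2 + 2*θ*t + X →
      (deriv g t = (c+1)*(c*ϖ*θ*t^2 + p*t - X*θ) /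
        (Real.sqrt (c^2*ϖ*t^2 - 2*c*θ*t + X) * Real.sqrt (ϖ*t^2 + 2*θ*t + X) * (ϖ*t^2 + 2*θ*t + X))) := by
    intro t hN hDt
    have hderiv := (hgder t hN hDt).deriv
    rw [hderiv]
    set sN := Real.sqrt (c^2*ϖ*t^2 - 2*c*θ*t + X) with hsNdef
    set sD := Real.sqrt (ϖ*t^2 + 2*θ*t + X) with hsDdef
    have hsN : 0 < sN := Real.sqrt_pos.mpr hN
    have hsD : 0 < sD := Real.sqrt_pos.mpr hDt
    have hsN2 : sN^2 = c^2*ϖ*t^2 - 2*c*θ*t + X := Real.sq_sqrt hN.le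
    have hsD2 : sD^2 = ϖ*t^2 + 2*θ*t + X := Real.sq_sqrt hDt.le
    clear_value sN sD
    have expand : ((2*(c^2*ϖ)*t - 2*c*θ)/(2*sN) * sD - sN * ((2*ϖ*t + 2*θ)/(2*sD)))
        = ((2*(c^2*ϖ)*t - 2*c*θ)*sD^2 - sN^2*(2*ϖ*t + 2*θ))/(2*sN*sD) := by
      field_simp
    rw [expand, hsN2, hsD2, div_div,
      div_eq_div_iff (by positivity) (by positivity)]
    ring
  have degen : ∀ t : ℝ, c^2*ϖ*t^2 - 2*c*θ*t + X = 0 →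
      c*ϖ*t = θ ∧ ϖ*X = θ^2 ∧ c*ϖ*θ*t^2 + p*t - X*θ = 0 := by
    intro t hNt0
    have hsq : (c*ϖ*t - θ)^2 = 0 := by
      have h1 : (c*ϖ*t - θ)^2 ≤ 0 := by nlinarith
      exact le_antisymm h1 (sq_nonneg _)
    have h2 : c*ϖ*t = θ := by
      have h := pow_eq_zero_iff (two_ne_zero) |>.mp hsq
      have := sub_eq_zero.mp h
      linarith
    have h3 : ϖ*X = θ^2 := by linear_combination ϖ * hNt0 - hsq
    refine ⟨h2, h3, ?_⟩
    linear_combination (θ*t + X)*h2 + (-t)*h3 + t*hpdef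
  have hNpos : ∀ t : ℝ, T < t → 0 < c^2*ϖ*t^2 - 2*c*θ*t + X := by
    intro t ht
    rcases ((hNnn t).lt_or_eq) with h | h
    · exact h
    · exfalso
      obtain ⟨-, -, hQt0⟩ := degen t h.symm
      linarith [hQpos t ht]
  refine ⟨?_, hTpos, ?_⟩
  · apply monotoneOn_of_deriv_nonneg (convex_Ici T)
    · rw [hgdef]
      apply ContinuousOn.div
      · exact Continuous.continuousOn (by fun_prop)
      · exact Continuous.continuousOn (by fun_prop)
      · intro s hs
        exact Real.sqrt_ne_zero'.mpr (hD s (le_trans hTpos.le hs))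
    · rw [interior_Ici]
      intro s hs
      exact (hgder s (hNpos s hs)
        (hD s (le_trans hTpos.le (le_of_lt hs)))).differentiableAt.differentiableWithinAt
    · rw [interior_Ici]
      intro s hs
      have hDs := hD s (le_trans hTpos.le (le_of_lt hs))
      rw [hsign s (hNpos s hs) hDs]
      apply div_nonneg
      · have := hQnonneg s (le_of_lt hs)
        nlinarith
      · have h1 := Real.sqrt_nonneg (c^2*ϖ*s^2 - 2*c*θ*s + X)
        have h2 := Real.sqrt_nonneg (ϖ*s^2 + 2*θ*s + X)
        positivity
  · intro t ht
    by_cases hNt : 0 < c^2*ϖ*t^2 - 2*c*θ*t + X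
    · have hDt := hD t ht
      rw [hsign t hNt hDt]
      have hP : 0 < Real.sqrt (c^2*ϖ*t^2 - 2*c*θ*t + X) * Real.sqrt (ϖ*t^2 + 2*θ*t + X)
          * (ϖ*t^2 + 2*θ*t + X) := by
        have h1 := Real.sqrt_pos.mpr hNt
        have h2 := Real.sqrt_pos.mpr hDt
        positivity
      constructor
      · intro h
        have h2 : 0 ≤ (c+1)*(c*ϖ*θ*t^2 + p*t - X*θ) := by
          have h3 := mul_nonneg h hP.le
          rwa [div_mul_cancel₀ _ (ne_of_gt hP)] at h3
        nlinarith
      · intro h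
        apply div_nonneg _ hP.le
        nlinarith
    · have hNt0 : c^2*ϖ*t^2 - 2*c*θ*t + X = 0 :=
        le_antisymm (not_lt.mp hNt) (hNnn t)
      obtain ⟨h2, h3, hQt0⟩ := degen t hNt0
      have hDt := hD t ht
      have hnd : ¬ DifferentiableAt ℝ g t := by
        intro hdiff
        have hsqrtD : DifferentiableAt ℝ (fun s : ℝ => Real.sqrt (ϖ*s^2 + 2*θ*s + X)) t :=
          ((hDder t).sqrt (ne_of_gt hDt)).differentiableAt
        have h5 : DifferentiableAt ℝ (fun s => g s * Real.sqrt (ϖ*s^2 + 2*θ*s + X)) t :=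
          hdiff.mul hsqrtD
        have hevD : ∀ᶠ s in nhds t, 0 < ϖ*s^2 + 2*θ*s + X :=
          ((by fun_prop : Continuous fun s : ℝ => ϖ*s^2 + 2*θ*s + X).continuousAt).eventually
            (eventually_gt_nhds hDt)
        have hev : (fun s => g s * Real.sqrt (ϖ*s^2 + 2*θ*s + X)) =ᶠ[nhds t]
            (fun s => (c*Real.sqrt ϖ)*|s - t|) := by
          filter_upwards [hevD] with s hs
          have hNs' : ϖ*(c^2*ϖ*s^2 - 2*c*θ*s + X) = ϖ*((c*Real.sqrt ϖ*|s - t|)^2) := by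
            rw [mul_pow, mul_pow, sq_abs, Real.sq_sqrt hϖ.le]
            linear_combination (2*c*s*ϖ - c*ϖ*t - θ)*h2 + h3
          have hNs := mul_left_cancel₀ (ne_of_gt hϖ) hNs'
          simp only [hgdef]
          rw [div_mul_cancel₀ _ (Real.sqrt_ne_zero'.mpr hs), hNs,
            Real.sqrt_sq (by positivity)]
        have h6 : DifferentiableAt ℝ (fun s => (c*Real.sqrt ϖ)*|s - t|) t :=
          hev.differentiableAt_iff.mp h5
        have h7 : DifferentiableAt ℝ (fun s : ℝ => |s - t|) t := by
          have h6' := h6.const_mul (c*Real.sqrt ϖ)⁻¹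
          have hsϖ : (0:ℝ) < Real.sqrt ϖ := Real.sqrt_pos.mpr hϖ
          have heq : (fun s : ℝ => |s - t|)
              = fun s => (c*Real.sqrt ϖ)⁻¹ * ((c*Real.sqrt ϖ)*|s - t|) := by
            funext s
            rw [← mul_assoc, inv_mul_cancel₀ (by positivity), one_mul]
          rw [heq]; exact h6'
        have h8 : DifferentiableAt ℝ (fun u : ℝ => |u|) 0 := by
          have hcomp := DifferentiableAt.comp (x := (0:ℝ))
            (g := fun s : ℝ => |s - t|) (f := fun u : ℝ => u + t)
            (by simpa using h7) ((differentiable_id.add_const t) 0)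
          have heq2 : (fun u : ℝ => |u|) = (fun s : ℝ => |s - t|) ∘ (fun u : ℝ => u + t) := by
            funext u; simp [Function.comp]
          rw [heq2]; exact hcomp
        exact not_differentiableAt_abs_zero h8
      rw [deriv_zero_of_not_differentiableAt hnd]
      constructor
      · intro _; exact le_of_eq hQt0.symm
      · intro _; exact le_refl 0

/-- monotonicity of `t ↦ |x − ct·z_ω^⊥|/|x + t·z_ω^⊥|` for
`t ≥ T`, nonvanishing of the denominator there, and the sign characterization of
the derivative. -/
theorem stmt19 (ω : ℝ) (hω : ω ∈ Set.Icc (0 : ℝ) 1) (c : ℝ) (hc : 0 < c)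
    (a b : ℝ) (hθ : 0 < ω * a + (1 - ω) * b) :
    let x : ℂ := ⟨a, b⟩
    let ϖ : ℝ := ω ^ 2 + (1 - ω) ^ 2
    let θ : ℝ := ω * a + (1 - ω) * b
    let T : ℝ := (-(c - 1) * ϖ * ‖x‖ ^ 2 +
      Real.sqrt ((c - 1) ^ 2 * ϖ ^ 2 * ‖x‖ ^ 4 +
        4 * c * ϖ * θ ^ 2 * ‖x‖ ^ 2)) / (2 * c * ϖ * θ)
    let f : ℝ → ℝ := fun t =>
      ‖x - ((c * t : ℝ) : ℂ) * zperp ω‖ / ‖x + (t : ℂ) * zperp ω‖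
    MonotoneOn f (Set.Ici T) ∧
    (∀ t ∈ Set.Ici T, x + (t : ℂ) * zperp ω ≠ 0) ∧
    (∀ t : ℝ, 0 ≤ t → (0 ≤ deriv f t ↔
      0 ≤ c * ϖ * θ * t ^ 2 + (c - 1) * ϖ * ‖x‖ ^ 2 * t - ‖x‖ ^ 2 * θ)) := by
  intro x ϖ θ T f
  have hϖ : (0:ℝ) < ω^2 + (1-ω)^2 := by nlinarith [sq_nonneg (2*ω-1)]
  have hθ' : (0:ℝ) < ω*a + (1-ω)*b := by linarith [hθ]
  have hcs : (ω*a + (1-ω)*b)^2 ≤ (ω^2 + (1-ω)^2)*(a^2 + b^2) := by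
    nlinarith [sq_nonneg ((1-ω)*a - ω*b)]
  have hX : (0:ℝ) < a^2 + b^2 := by nlinarith [mul_pos hθ' hθ']
  obtain ⟨m1, m2, m3⟩ := auxMain (ω^2 + (1-ω)^2) (ω*a + (1-ω)*b) (a^2 + b^2) c hϖ hθ' hX hc hcs
  have hX2 : ‖x‖ ^ 2 = a^2 + b^2 := by
    show ‖(⟨a, b⟩ : ℂ)‖ ^ 2 = _
    rw [Complex.sq_norm, Complex.normSq_mk]; ring
  have hX4 : ‖x‖ ^ 4 = (a^2 + b^2)^2 := by
    rw [show (4:ℕ) = 2*2 from rfl, pow_mul, hX2]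
  have hf : f = fun t => Real.sqrt (c^2*(ω^2 + (1-ω)^2)*t^2 - 2*c*(ω*a + (1-ω)*b)*t + (a^2 + b^2))
      / Real.sqrt ((ω^2 + (1-ω)^2)*t^2 + 2*(ω*a + (1-ω)*b)*t + (a^2 + b^2)) := by
    funext t
    show ‖(⟨a, b⟩ : ℂ) - ((c*t : ℝ) : ℂ) * zperp ω‖ / ‖(⟨a, b⟩ : ℂ) + (t : ℂ) * zperp ω‖ = _
    rw [Complex.norm_def, Complex.norm_def]
    congr 1
    · rw [Complex.normSq_apply]
      simp [zperp, Complex.sub_re, Complex.sub_im, Complex.add_re, Complex.add_im,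
        Complex.mul_re, Complex.mul_im, Complex.ofReal_re, Complex.ofReal_im]
      ring
    · rw [Complex.normSq_apply]
      simp [zperp, Complex.add_re, Complex.add_im,
        Complex.mul_re, Complex.mul_im, Complex.ofReal_re, Complex.ofReal_im]
      ring
  have hTeq : T = (-(c-1)*(ω^2 + (1-ω)^2)*(a^2 + b^2) +
      Real.sqrt ((c-1)^2*(ω^2 + (1-ω)^2)^2*(a^2 + b^2)^2 +
        4*c*(ω^2 + (1-ω)^2)*(ω*a + (1-ω)*b)^2*(a^2 + b^2)))/(2*c*(ω^2 + (1-ω)^2)*(ω*a + (1-ω)*b)) := by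
    show (-(c - 1) * ϖ * ‖x‖ ^ 2 +
      Real.sqrt ((c - 1) ^ 2 * ϖ ^ 2 * ‖x‖ ^ 4 +
        4 * c * ϖ * θ ^ 2 * ‖x‖ ^ 2)) / (2 * c * ϖ * θ) = _
    rw [hX2, hX4]
  refine ⟨?_, ?_, ?_⟩
  · rw [hf, hTeq]
    exact m1
  · intro t ht
    have hTpos : 0 < T := by rw [hTeq]; exact m2
    have ht0 : (0:ℝ) ≤ t := le_trans hTpos.le (by exact ht)
    have hDpos : 0 < (ω^2 + (1-ω)^2)*t^2 + 2*(ω*a + (1-ω)*b)*t + (a^2 + b^2) := by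
      nlinarith [sq_nonneg t]
    have habs : ‖x + (t:ℂ) * zperp ω‖ ^ 2
        = (ω^2 + (1-ω)^2)*t^2 + 2*(ω*a + (1-ω)*b)*t + (a^2 + b^2) := by
      show ‖(⟨a, b⟩ : ℂ) + (t:ℂ) * zperp ω‖ ^ 2 = _
      rw [Complex.sq_norm, Complex.normSq_apply]
      simp [zperp, Complex.add_re, Complex.add_im,
        Complex.mul_re, Complex.mul_im, Complex.ofReal_re, Complex.ofReal_im]
      ring
    intro hzero
    rw [hzero] at habs
    simp at habs
    nlinarith [hDpos]
  · intro t ht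
    rw [hf, hX2]
    exact m3 t ht
end
end
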